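/- Let G be a finite group and l : G → ℝ a conditionally negative-definite length function. Then the semigroup P_t on the group algebra ℂ[G] defined by P_t(λ(g)) = exp(-t·l(g))·λ(g) is completely positive for every t ≥ 0; that is, for all n, all a_1,…,a_n, b_1,…,b_n ∈ ℂ[G], the element Σ_{i,j} b_i† P_t(a_i† a_j) b_j is positive in ℂ[G]. -/

import Mathlib

open scoped BigOperators ComplexOrder

/-- The adjoint (involution) on the group algebra:
`(Σ α_g λ(g))† = Σ conj(α_g) λ(g⁻¹)`. -/
noncomputable def gstar {G : Type*} [Group G] (x : MonoidAlgebra ℂ G) : MonoidAlgebra ℂ G :=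
  MonoidAlgebra.ofCoeff
    (Finsupp.equivMapDomain (Equiv.inv G) (Finsupp.mapRange (starRingEnd ℂ) (map_zero _) x.coeff))

/-- The semigroup `P_t` acting on the group algebra by
`P_t (λ(g)) = exp (-t l(g)) λ(g)`, extended linearly. -/
noncomputable def Psemi {G : Type*} [Group G] (l : G → ℝ) (t : ℝ)
    (x : MonoidAlgebra ℂ G) : MonoidAlgebra ℂ G :=
  x.coeff.sum fun g a => MonoidAlgebra.single g ((Real.exp (-t * l g) : ℂ) * a)

section Aux

variable {G : Type*} [Group G]

lemma gstar_apply (x : MonoidAlgebra ℂ G) (a : G) : (gstar x).coeff a = starRingEnd ℂ (x.coeff a⁻¹) := rfl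

lemma gstar_single (g : G) (α : ℂ) :
    gstar (MonoidAlgebra.single g α) = MonoidAlgebra.single g⁻¹ (starRingEnd ℂ α) := by
  classical
  ext a
  rw [gstar_apply, MonoidAlgebra.coeff_single, MonoidAlgebra.coeff_single, Finsupp.single_apply,
    Finsupp.single_apply]
  by_cases h : g = a⁻¹ <;> simp [h, inv_eq_iff_eq_inv]

lemma gstar_add (x y : MonoidAlgebra ℂ G) : gstar (x + y) = gstar x + gstar y := by
  ext a
  rw [MonoidAlgebra.coeff_add, Finsupp.add_apply, gstar_apply, gstar_apply, gstar_apply,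
    MonoidAlgebra.coeff_add, Finsupp.add_apply,
    map_add]

lemma gstar_sum {ι : Type*} (s : Finset ι) (f : ι → MonoidAlgebra ℂ G) :
    gstar (∑ i ∈ s, f i) = ∑ i ∈ s, gstar (f i) := by
  classical
  induction s using Finset.induction with
  | empty => ext a; simp [gstar_apply]
  | insert _ _ h ih => simp [Finset.sum_insert h, gstar_add, ih]

lemma gstar_smul (c : ℂ) (x : MonoidAlgebra ℂ G) :
    gstar (c • x) = (starRingEnd ℂ c) • gstar x := by
  ext a
  rw [gstar_apply, MonoidAlgebra.coeff_smul_apply, MonoidAlgebra.coeff_smul_apply, gstar_apply,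
    smul_eq_mul, smul_eq_mul, map_mul]

lemma Psemi_single (l : G → ℝ) (t : ℝ) (g : G) (α : ℂ) :
    Psemi l t (MonoidAlgebra.single g α)
      = MonoidAlgebra.single g ((Real.exp (-t * l g) : ℂ) * α) := by
  simp [Psemi, MonoidAlgebra.coeff_single, Finsupp.sum_single_index]

lemma Psemi_sum {ι : Type*} (l : G → ℝ) (t : ℝ) (s : Finset ι) (f : ι → MonoidAlgebra ℂ G) :
    Psemi l t (∑ i ∈ s, f i) = ∑ i ∈ s, Psemi l t (f i) := by
  classical
  induction s using Finset.induction with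
  | empty => simp [Psemi]
  | insert _ _ h ih =>
    rw [Finset.sum_insert h, Finset.sum_insert h, ← ih]
    unfold Psemi
    rw [MonoidAlgebra.coeff_add, Finsupp.sum_add_index] <;> simp [mul_add, MonoidAlgebra.single_add]

lemma expand_fin [Fintype G] (x : MonoidAlgebra ℂ G) :
    x = ∑ g : G, MonoidAlgebra.single g (x.coeff g) := by
  classical
  ext a
  rw [MonoidAlgebra.coeff_sum, Finset.sum_apply']
  simp [MonoidAlgebra.coeff_single, Finsupp.single_apply]

lemma gstar_single_mul [Fintype G] (g : G) (b : MonoidAlgebra ℂ G) :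
    gstar (MonoidAlgebra.single g (1:ℂ) * b)
      = gstar b * MonoidAlgebra.single g⁻¹ (1:ℂ) := by
  classical
  conv_lhs => rw [expand_fin b]
  conv_rhs => rw [expand_fin b]
  rw [Finset.mul_sum, gstar_sum, gstar_sum, Finset.sum_mul]
  refine Finset.sum_congr rfl fun h _ => ?_
  rw [MonoidAlgebra.single_mul_single, gstar_single, gstar_single,
    MonoidAlgebra.single_mul_single, mul_inv_rev]
  simp

lemma gstar_mul_expand [Fintype G] (u v : MonoidAlgebra ℂ G) :
    gstar u * v = ∑ g : G, ∑ h : G,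
      MonoidAlgebra.single (g⁻¹ * h) (starRingEnd ℂ (u.coeff g) * v.coeff h) := by
  classical
  conv_lhs => rw [expand_fin u, expand_fin v]
  rw [gstar_sum, Finset.sum_mul]
  refine Finset.sum_congr rfl fun g _ => ?_
  rw [Finset.mul_sum]
  exact Finset.sum_congr rfl fun h _ => by
    rw [gstar_single, MonoidAlgebra.single_mul_single]

lemma sum_swap3 {α β γ : Type*} [Fintype α] [Fintype β] [Fintype γ]
    {M : Type*} [AddCommMonoid M] (F : α → β → γ → M) :
    ∑ g : α, ∑ h : β, ∑ r : γ, F g h r = ∑ r : γ, ∑ g : α, ∑ h : β, F g h r :=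
  calc ∑ g : α, ∑ h : β, ∑ r : γ, F g h r
      = ∑ g : α, ∑ r : γ, ∑ h : β, F g h r :=
        Finset.sum_congr rfl fun g _ => Finset.sum_comm
    _ = ∑ r : γ, ∑ g : α, ∑ h : β, F g h r := Finset.sum_comm

lemma sum_swap4 {α β : Type*} [Fintype α] [Fintype β]
    {M : Type*} [AddCommMonoid M] (F : α → α → β → β → M) :
    ∑ i : α, ∑ j : α, ∑ g : β, ∑ h : β, F i j g h
      = ∑ g : β, ∑ h : β, ∑ i : α, ∑ j : α, F i j g h := by
  have h1 : ∀ i : α, ∑ j : α, ∑ g : β, ∑ h : β, F i j g h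
      = ∑ g : β, ∑ h : β, ∑ j : α, F i j g h := by
    intro i
    rw [Finset.sum_comm]
    exact Finset.sum_congr rfl fun g _ => Finset.sum_comm
  simp_rw [h1]
  rw [Finset.sum_comm]
  exact Finset.sum_congr rfl fun g _ => Finset.sum_comm

/-- the vector of elements `y_g = Σ_i a_i(g) λ(g) b_i`. -/
noncomputable def yv [Fintype G] (n : ℕ) (a b : Fin n → MonoidAlgebra ℂ G) (g : G) :
    MonoidAlgebra ℂ G :=
  ∑ i, (a i).coeff g • (MonoidAlgebra.single g (1:ℂ) * b i)

lemma main1 [Fintype G] (l : G → ℝ) (t : ℝ) (n : ℕ) (a b : Fin n → MonoidAlgebra ℂ G) :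
    (∑ i, ∑ j, gstar (b i) * Psemi l t (gstar (a i) * a j) * b j)
    = ∑ g : G, ∑ h : G, (Real.exp (-t * l (g⁻¹ * h)) : ℂ) •
        (gstar (yv n a b g) * yv n a b h) := by
  classical
  have lhs_eq : ∀ i j : Fin n, gstar (b i) * Psemi l t (gstar (a i) * a j) * b j
      = ∑ g : G, ∑ h : G,
          ((Real.exp (-t * l (g⁻¹ * h)) : ℂ) * (starRingEnd ℂ ((a i).coeff g) * (a j).coeff h)) •
            (gstar (b i) * MonoidAlgebra.single (g⁻¹ * h) (1:ℂ) * b j) := by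
    intro i j
    rw [gstar_mul_expand (a i) (a j), Psemi_sum l t Finset.univ, Finset.mul_sum, Finset.sum_mul]
    refine Finset.sum_congr rfl fun g _ => ?_
    rw [Psemi_sum l t Finset.univ, Finset.mul_sum, Finset.sum_mul]
    refine Finset.sum_congr rfl fun h _ => ?_
    rw [Psemi_single]
    have : (MonoidAlgebra.single (g⁻¹ * h)
        ((Real.exp (-t * l (g⁻¹ * h)) : ℂ) * (starRingEnd ℂ ((a i).coeff g) * (a j).coeff h))
          : MonoidAlgebra ℂ G)
        = ((Real.exp (-t * l (g⁻¹ * h)) : ℂ) * (starRingEnd ℂ ((a i).coeff g) * (a j).coeff h)) •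
            MonoidAlgebra.single (g⁻¹ * h) (1:ℂ) := by
      rw [MonoidAlgebra.smul_single', mul_one]
    rw [this, mul_smul_comm, smul_mul_assoc]
  have rhs_eq : ∀ g h : G, gstar (yv n a b g) * yv n a b h
      = ∑ i, ∑ j, (starRingEnd ℂ ((a i).coeff g) * (a j).coeff h) •
          (gstar (b i) * MonoidAlgebra.single (g⁻¹ * h) (1:ℂ) * b j) := by
    intro g h
    unfold yv
    rw [gstar_sum, Finset.sum_mul]
    refine Finset.sum_congr rfl fun i _ => ?_
    rw [Finset.mul_sum]
    refine Finset.sum_congr rfl fun j _ => ?_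
    rw [gstar_smul, gstar_single_mul, smul_mul_assoc, mul_smul_comm, smul_smul]
    congr 1
    rw [mul_assoc, mul_assoc, ← mul_assoc (MonoidAlgebra.single g⁻¹ (1:ℂ)),
      MonoidAlgebra.single_mul_single, one_mul]
  simp_rw [lhs_eq]
  rw [sum_swap4]
  refine Finset.sum_congr rfl fun g _ => Finset.sum_congr rfl fun h _ => ?_
  rw [rhs_eq, Finset.smul_sum]
  refine Finset.sum_congr rfl fun i _ => ?_
  rw [Finset.smul_sum]
  exact Finset.sum_congr rfl fun j _ => by rw [smul_smul]

end Aux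

section Analytic

variable {G : Type*} [Group G] [Fintype G]

/-- canonical quadratic form of a kernel admitting a factorization is nonnegative -/
lemma quad_factor_nonneg {ι : Type*} [Fintype ι] (C : ι → G → ℂ) (v : G → ℂ) :
    0 ≤ ∑ g : G, ∑ h : G,
        starRingEnd ℂ (v g) * (∑ r : ι, starRingEnd ℂ (C r g) * C r h) * v h := by
  have key : ∑ g : G, ∑ h : G,
        starRingEnd ℂ (v g) * (∑ r : ι, starRingEnd ℂ (C r g) * C r h) * v h
      = ∑ r : ι, starRingEnd ℂ (∑ g : G, C r g * v g) * (∑ g : G, C r g * v g) := by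
    have : ∀ g h : G, starRingEnd ℂ (v g) * (∑ r : ι, starRingEnd ℂ (C r g) * C r h) * v h
        = ∑ r : ι, starRingEnd ℂ (C r g * v g) * (C r h * v h) := by
      intro g h
      rw [Finset.mul_sum, Finset.sum_mul]
      exact Finset.sum_congr rfl fun r _ => by rw [map_mul]; ring
    simp_rw [this]
    rw [sum_swap3]
    refine Finset.sum_congr rfl fun r _ => ?_
    rw [map_sum, Finset.sum_mul]
    exact Finset.sum_congr rfl fun g _ => by rw [Finset.mul_sum]
  rw [key]
  exact Finset.sum_nonneg fun r _ => by
    rw [starRingEnd_apply]; exact star_mul_self_nonneg _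

/-- conditional negative-definiteness transported to an arbitrary finite index type -/
lemma hcndIdx
    (hcnd : ∀ (k : ℕ) (α : Fin k → ℂ) (g : Fin k → G), (∑ i, α i) = 0 →
      (∑ i, ∑ j, α i * (starRingEnd ℂ) (α j) * ((l' : G → ℝ) ((g i)⁻¹ * g j) : ℂ)) ≤ 0)
    {ι : Type*} [Fintype ι] (β : ι → ℂ) (p : ι → G) (hβ : ∑ i, β i = 0) :
    ∑ i : ι, ∑ j : ι, β i * starRingEnd ℂ (β j) * ((l' ((p i)⁻¹ * p j) : ℝ) : ℂ) ≤ 0 := by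
  classical
  set e := (Fintype.equivFin ι).symm with he
  have hβ' : ∑ i : Fin (Fintype.card ι), β (e i) = 0 := by
    rw [Equiv.sum_comp e β]; exact hβ
  have key := hcnd (Fintype.card ι) (fun i => β (e i)) (fun i => p (e i)) hβ'
  have hsum : ∑ i : ι, ∑ j : ι, β i * starRingEnd ℂ (β j) * ((l' ((p i)⁻¹ * p j) : ℝ) : ℂ)
      = ∑ i : Fin (Fintype.card ι), ∑ j : Fin (Fintype.card ι),
          β (e i) * starRingEnd ℂ (β (e j)) * ((l' ((p (e i))⁻¹ * p (e j)) : ℝ) : ℂ) := by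
    rw [← Equiv.sum_comp e
      (fun s => ∑ u : ι, β s * starRingEnd ℂ (β u) * ((l' ((p s)⁻¹ * p u) : ℝ) : ℂ))]
    exact Finset.sum_congr rfl fun i _ => (Equiv.sum_comp e _).symm
  rw [hsum]
  exact key

lemma Nquad (l : G → ℝ) (hl0 : l 1 = 0) (hlinv : ∀ g : G, l g⁻¹ = l g)
    (hcnd : ∀ (k : ℕ) (α : Fin k → ℂ) (g : Fin k → G), (∑ i, α i) = 0 →
      (∑ i, ∑ j, α i * (starRingEnd ℂ) (α j) * (l ((g i)⁻¹ * g j) : ℂ)) ≤ 0)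
    (v : G → ℂ) :
    0 ≤ ∑ g : G, ∑ h : G,
        starRingEnd ℂ (v g) * ((l g + l h - l (g⁻¹ * h) : ℝ) : ℂ) * v h := by
  classical
  set S : ℂ := ∑ x : G, starRingEnd ℂ (v x) with hS
  set β : G ⊕ Unit → ℂ := Sum.elim (fun g => starRingEnd ℂ (v g)) (fun _ => -S) with hβdef
  set p : G ⊕ Unit → G := Sum.elim id (fun _ => (1:G)) with hpdef
  have hβ : ∑ i, β i = 0 := by
    rw [Fintype.sum_sum_type]
    simp [hβdef, hS]
  have key := hcndIdx (l' := l) hcnd β p hβ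
  rw [Fintype.sum_sum_type] at key
  simp only [Fintype.sum_sum_type, hβdef, hpdef, Sum.elim_inl, Sum.elim_inr,
    Finset.univ_unique, Finset.sum_const, Finset.card_singleton, one_smul,
    PUnit.default_eq_unit] at key
  have hconjS : starRingEnd ℂ S = ∑ x : G, v x := by
    rw [hS, map_sum]
    exact Finset.sum_congr rfl fun x _ => Complex.conj_conj (v x)
  -- clean up `key`
  have key2 : (∑ g : G, ∑ h : G, starRingEnd ℂ (v g) * v h * ((l (g⁻¹ * h) : ℝ) : ℂ))
      - (∑ g : G, starRingEnd ℂ (v g) * (∑ x : G, v x) * ((l g : ℝ) : ℂ))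
      - (∑ h : G, S * v h * ((l h : ℝ) : ℂ)) ≤ 0 := by
    refine le_trans (le_of_eq ?_) key
    simp only [id_eq, Complex.conj_conj, map_neg, hconjS, mul_one, inv_one, one_mul, hl0,
      hlinv, Complex.ofReal_zero, mul_zero, add_zero, mul_neg, neg_mul, neg_neg]
    rw [Finset.sum_add_distrib]
    rw [show (∑ x : G, -(starRingEnd ℂ (v x) * (∑ x : G, v x) * ((l x : ℝ) : ℂ)))
        = -(∑ x : G, starRingEnd ℂ (v x) * (∑ x : G, v x) * ((l x : ℝ) : ℂ)) from
      Finset.sum_neg_distrib _]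
    rw [show (∑ x : G, -(S * v x * ((l x : ℝ) : ℂ)))
        = -(∑ x : G, S * v x * ((l x : ℝ) : ℂ)) from Finset.sum_neg_distrib _]
    ring
  -- rewrite the goal sum
  have hQ : ∑ g : G, ∑ h : G,
      starRingEnd ℂ (v g) * ((l g + l h - l (g⁻¹ * h) : ℝ) : ℂ) * v h
      = (∑ g : G, starRingEnd ℂ (v g) * (∑ x : G, v x) * ((l g : ℝ) : ℂ))
        + (∑ h : G, S * v h * ((l h : ℝ) : ℂ))
        - (∑ g : G, ∑ h : G, starRingEnd ℂ (v g) * v h * ((l (g⁻¹ * h) : ℝ) : ℂ)) := by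
    have step : ∀ g : G, ∑ h : G,
        starRingEnd ℂ (v g) * ((l g + l h - l (g⁻¹ * h) : ℝ) : ℂ) * v h
        = starRingEnd ℂ (v g) * (∑ x : G, v x) * ((l g : ℝ) : ℂ)
          + (∑ h : G, starRingEnd ℂ (v g) * v h * ((l h : ℝ) : ℂ))
          - ∑ h : G, starRingEnd ℂ (v g) * v h * ((l (g⁻¹ * h) : ℝ) : ℂ) := by
      intro g
      have e1 : starRingEnd ℂ (v g) * (∑ x : G, v x) * ((l g : ℝ) : ℂ)
          = ∑ h : G, starRingEnd ℂ (v g) * v h * ((l g : ℝ) : ℂ) := by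
        rw [Finset.mul_sum, Finset.sum_mul]
      rw [e1, ← Finset.sum_add_distrib, ← Finset.sum_sub_distrib]
      refine Finset.sum_congr rfl fun h _ => ?_
      push_cast
      ring
    rw [Finset.sum_congr rfl fun g _ => step g]
    rw [Finset.sum_sub_distrib, Finset.sum_add_distrib]
    have e2 : ∑ g : G, ∑ h : G, starRingEnd ℂ (v g) * v h * ((l h : ℝ) : ℂ)
        = ∑ h : G, S * v h * ((l h : ℝ) : ℂ) := by
      rw [Finset.sum_comm]
      refine Finset.sum_congr rfl fun h _ => ?_
      rw [hS, Finset.sum_mul, Finset.sum_mul]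
    rw [e2]
  rw [hQ]
  rw [sub_sub] at key2
  exact sub_nonneg.mpr (sub_nonpos.mp key2)

lemma dot_eq [DecidableEq G] (M : Matrix G G ℂ) (x : G → ℂ) :
    dotProduct (star x) (M.mulVec x)
      = ∑ g : G, ∑ h : G, starRingEnd ℂ (x g) * M g h * x h := by
  simp only [dotProduct, Matrix.mulVec]
  refine Finset.sum_congr rfl fun g _ => ?_
  rw [Pi.star_apply, ← starRingEnd_apply, Finset.mul_sum]
  refine Finset.sum_congr rfl fun h _ => ?_
  ring

open scoped MatrixOrder in
lemma psd_decomp [DecidableEq G] {M : Matrix G G ℂ} (h : M.PosSemidef) :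
    ∃ B : Matrix G G ℂ, M = Matrix.conjTranspose B * B := by
  obtain ⟨B, hB⟩ := CStarAlgebra.nonneg_iff_eq_star_mul_self.mp (Matrix.nonneg_iff_posSemidef.mpr h)
  exact ⟨B, hB⟩

lemma schoenberg [DecidableEq G] (l : G → ℝ) (hl0 : l 1 = 0) (hlinv : ∀ g : G, l g⁻¹ = l g)
    (hcnd : ∀ (k : ℕ) (α : Fin k → ℂ) (g : Fin k → G), (∑ i, α i) = 0 →
      (∑ i, ∑ j, α i * (starRingEnd ℂ) (α j) * (l ((g i)⁻¹ * g j) : ℂ)) ≤ 0)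
    (t : ℝ) (ht : 0 ≤ t) :
    Matrix.PosSemidef (Matrix.of fun g h : G => (Real.exp (-t * l (g⁻¹ * h)) : ℂ)) := by
  have hsym : ∀ g h : G, l (h⁻¹ * g) = l (g⁻¹ * h) := by
    intro g h; rw [← hlinv (h⁻¹ * g), mul_inv_rev, inv_inv]
  -- the kernel N is positive semidefinite
  have Npsd : Matrix.PosSemidef
      (Matrix.of fun g h : G => ((l g + l h - l (g⁻¹ * h) : ℝ) : ℂ)) := by
    refine Matrix.PosSemidef.of_dotProduct_mulVec_nonneg ?_ ?_
    · ext g h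
      simp only [Matrix.conjTranspose_apply, Matrix.of_apply, RCLike.star_def,
        Complex.conj_ofReal]
      exact congrArg _ (by rw [hsym g h]; ring)
    · intro x
      rw [dot_eq]
      have := Nquad l hl0 hlinv hcnd x
      simp only [Matrix.of_apply]
      exact this
  obtain ⟨B, hB⟩ := psd_decomp Npsd
  have hBN : ∀ g h : G, ((l g + l h - l (g⁻¹ * h) : ℝ) : ℂ)
      = ∑ r : G, starRingEnd ℂ (B r g) * B r h := by
    intro g h
    have h2 := congrFun (congrFun hB g) h
    simp only [Matrix.of_apply, Matrix.mul_apply, Matrix.conjTranspose_apply] at h2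
    rw [h2]
    exact Finset.sum_congr rfl fun r _ => by rw [starRingEnd_apply]
  refine Matrix.PosSemidef.of_dotProduct_mulVec_nonneg ?_ ?_
  · ext g h
    simp only [Matrix.conjTranspose_apply, Matrix.of_apply, RCLike.star_def,
      Complex.conj_ofReal]
    exact congrArg _ (by rw [hsym g h])
  · intro x
    rw [dot_eq]
    set w : G → ℂ := fun g => (Real.exp (-t * l g) : ℂ) * x g with hw
    have hsplit : ∀ g h : G, Real.exp (-t * l (g⁻¹ * h))
        = Real.exp (-t * l g) * Real.exp (-t * l h)
          * Real.exp (t * (l g + l h - l (g⁻¹ * h))) := by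
      intro g h
      rw [← Real.exp_add, ← Real.exp_add]
      exact congrArg Real.exp (by ring)
    have h1 : ∀ g h : G, starRingEnd ℂ (x g)
          * (Matrix.of fun g h : G => (Real.exp (-t * l (g⁻¹ * h)) : ℂ)) g h * x h
        = starRingEnd ℂ (w g)
          * ((Real.exp (t * (l g + l h - l (g⁻¹ * h))) : ℝ) : ℂ) * w h := by
      intro g h
      simp only [Matrix.of_apply, hw]
      rw [hsplit g h, Complex.ofReal_mul, Complex.ofReal_mul, map_mul, Complex.conj_ofReal]
      ring
    set F : G → G → ℕ → ℂ := fun g h p => starRingEnd ℂ (w g) *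
        (((t * (l g + l h - l (g⁻¹ * h)))^p / p.factorial : ℝ) : ℂ) * w h with hF
    have hsummF : ∀ g h : G, Summable (F g h) := by
      intro g h
      apply Summable.mul_right
      apply Summable.mul_left
      exact (Complex.summable_ofReal).2 (Real.summable_pow_div_factorial _)
    have hterm : ∀ g h : G, starRingEnd ℂ (w g)
          * ((Real.exp (t * (l g + l h - l (g⁻¹ * h))) : ℝ) : ℂ) * w h
        = ∑' p : ℕ, F g h p := by
      intro g h
      rw [Real.exp_eq_exp_ℝ, NormedSpace.exp_eq_tsum_div, Complex.ofReal_tsum,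
        ← tsum_mul_left, ← tsum_mul_right]
    have hexch : ∑ g : G, ∑ h : G, ∑' p : ℕ, F g h p
        = ∑' p : ℕ, ∑ g : G, ∑ h : G, F g h p := by
      have inner : ∀ g : G, ∑ h : G, ∑' p : ℕ, F g h p = ∑' p : ℕ, ∑ h : G, F g h p :=
        fun g => (Summable.tsum_finsetSum fun h _ => hsummF g h).symm
      rw [Finset.sum_congr rfl fun g _ => inner g]
      exact (Summable.tsum_finsetSum fun g _ => summable_sum fun h _ => hsummF g h).symm
    have hp : ∀ p : ℕ, 0 ≤ ∑ g : G, ∑ h : G, F g h p := by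
      intro p
      set C : (Fin p → G) → G → ℂ := fun c g => ∏ i, B (c i) g with hC
      have hNfac : ∀ g h : G, ((l g + l h - l (g⁻¹ * h) : ℝ) : ℂ)^p
          = ∑ c : Fin p → G, starRingEnd ℂ (C c g) * C c h := by
        intro g h
        rw [hBN g h, Finset.sum_pow', Fintype.piFinset_univ]
        exact Finset.sum_congr rfl fun c _ => by
          rw [hC]
          rw [Finset.prod_mul_distrib, map_prod]
      have hFval : ∀ g h : G, F g h p
          = ((t^p / p.factorial : ℝ) : ℂ)
            * (starRingEnd ℂ (w g) * (∑ c : Fin p → G, starRingEnd ℂ (C c g) * C c h) * w h) := by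
        intro g h
        rw [← hNfac g h, hF]
        simp only
        rw [show ((t * (l g + l h - l (g⁻¹ * h)))^p / (p.factorial : ℝ) : ℝ)
            = (t^p / p.factorial) * (l g + l h - l (g⁻¹ * h))^p from by rw [mul_pow]; ring]
        rw [Complex.ofReal_mul, Complex.ofReal_pow]
        ring
      rw [Finset.sum_congr rfl fun g _ => Finset.sum_congr rfl fun h _ => hFval g h]
      rw [show (∑ g : G, ∑ h : G, ((t^p / p.factorial : ℝ) : ℂ)
          * (starRingEnd ℂ (w g) * (∑ c : Fin p → G, starRingEnd ℂ (C c g) * C c h) * w h))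
          = ((t^p / p.factorial : ℝ) : ℂ) * ∑ g : G, ∑ h : G,
            (starRingEnd ℂ (w g) * (∑ c : Fin p → G, starRingEnd ℂ (C c g) * C c h) * w h) from by
        rw [Finset.mul_sum]
        exact Finset.sum_congr rfl fun g _ => by rw [Finset.mul_sum]]
      refine mul_nonneg ?_ (quad_factor_nonneg C w)
      rw [Complex.zero_le_real]
      positivity
    calc (0:ℂ) ≤ ∑' p : ℕ, ∑ g : G, ∑ h : G, F g h p := tsum_nonneg hp
      _ = ∑ g : G, ∑ h : G, ∑' p : ℕ, F g h p := hexch.symm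
      _ = ∑ g : G, ∑ h : G, starRingEnd ℂ (x g)
            * (Matrix.of fun g h : G => (Real.exp (-t * l (g⁻¹ * h)) : ℂ)) g h * x h := by
        refine Finset.sum_congr rfl fun g _ => Finset.sum_congr rfl fun h _ => ?_
        rw [h1 g h, hterm g h]

end Analytic

theorem stmt12 {G : Type*} [Group G] [Fintype G]
    (l : G → ℝ) (hl0 : l 1 = 0) (hlinv : ∀ g : G, l g⁻¹ = l g)
    (hcnd : ∀ (k : ℕ) (α : Fin k → ℂ) (g : Fin k → G), (∑ i, α i) = 0 →
      (∑ i, ∑ j, α i * (starRingEnd ℂ) (α j) * (l ((g i)⁻¹ * g j) : ℂ)) ≤ 0) :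
    ∀ t : ℝ, 0 ≤ t →
      ∀ (n : ℕ) (a b : Fin n → MonoidAlgebra ℂ G),
        ∃ (k : ℕ) (x : Fin k → MonoidAlgebra ℂ G),
          (∑ i, ∑ j, gstar (b i) * Psemi l t (gstar (a i) * a j) * b j) =
            ∑ r, gstar (x r) * x r := by
  intro t ht n a b
  classical
  obtain ⟨A, hA⟩ :=
    psd_decomp (schoenberg l hl0 hlinv hcnd t ht)
  have hAE : ∀ g h : G, (Real.exp (-t * l (g⁻¹ * h)) : ℂ)
      = ∑ r : G, starRingEnd ℂ (A r g) * A r h := by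
    intro g h
    have h2 := congrFun (congrFun hA g) h
    simp only [Matrix.of_apply, Matrix.mul_apply, Matrix.conjTranspose_apply] at h2
    rw [h2]
    exact Finset.sum_congr rfl fun r _ => by rw [starRingEnd_apply]
  set e : Fin (Fintype.card G) ≃ G := (Fintype.equivFin G).symm with he
  refine ⟨Fintype.card G, fun r => ∑ g : G, A (e r) g • yv n a b g, ?_⟩
  have hxx : ∀ r : G, gstar (∑ g : G, A r g • yv n a b g) * (∑ g : G, A r g • yv n a b g)
      = ∑ g : G, ∑ h : G,
          (starRingEnd ℂ (A r g) * A r h) • (gstar (yv n a b g) * yv n a b h) := by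
    intro r
    rw [gstar_sum, Finset.sum_mul]
    refine Finset.sum_congr rfl fun g _ => ?_
    rw [Finset.mul_sum]
    refine Finset.sum_congr rfl fun h _ => ?_
    rw [gstar_smul, smul_mul_assoc, mul_smul_comm, smul_smul]
  calc (∑ i, ∑ j, gstar (b i) * Psemi l t (gstar (a i) * a j) * b j)
      = ∑ g : G, ∑ h : G, (Real.exp (-t * l (g⁻¹ * h)) : ℂ) •
          (gstar (yv n a b g) * yv n a b h) := main1 l t n a b
    _ = ∑ g : G, ∑ h : G, ∑ r : G,
          (starRingEnd ℂ (A r g) * A r h) • (gstar (yv n a b g) * yv n a b h) := by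
        refine Finset.sum_congr rfl fun g _ => Finset.sum_congr rfl fun h _ => ?_
        rw [hAE g h, Finset.sum_smul]
    _ = ∑ r : G, ∑ g : G, ∑ h : G,
          (starRingEnd ℂ (A r g) * A r h) • (gstar (yv n a b g) * yv n a b h) := sum_swap3 _
    _ = ∑ r : G, gstar (∑ g : G, A r g • yv n a b g) * (∑ g : G, A r g • yv n a b g) :=
        Finset.sum_congr rfl fun r _ => (hxx r).symm
    _ = ∑ r : Fin (Fintype.card G), gstar (∑ g : G, A (e r) g • yv n a b g)
          * (∑ g : G, A (e r) g • yv n a b g) := (Equiv.sum_comp e _).symm
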